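/- Let P : ℝ → B(H) satisfy P(k)² = P(k) = P(k)*, be C¹, and be time-reversal symmetric: P(-k) = θ·P(k)·θ⁻¹ for an antiunitary θ with θ² = -1. Then the generator A(k) := i·[∂ₖP(k), P(k)] satisfies A(-k) = θ·A(k)·θ⁻¹, and consequently the parallel transport satisfies T(-k, -k') = θ·T(k, k')·θ⁻¹. -/

import Mathlib

open Set

lemma ode_unique {E : Type*} [NormedAddCommGroup E] [NormedSpace ℂ E]
    (B : ℝ → E →L[ℂ] E) (hB : Continuous B) (f g : ℝ → E)
    (hf : ∀ t, HasDerivAt f (B t (f t)) t) (hg : ∀ t, HasDerivAt g (B t (g t)) t)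
    (t₀ : ℝ) (h0 : f t₀ = g t₀) (t : ℝ) : f t = g t := by
  set a := min t t₀ - 1 with ha
  set b := max t t₀ + 1 with hb
  obtain ⟨C, hC⟩ : ∃ C, ∀ s ∈ Icc a b, ‖B s‖ ≤ C :=
    isCompact_Icc.exists_bound_of_continuousOn hB.continuousOn
  set K : NNReal := ⟨max C 0, le_max_right _ _⟩ with hK
  set s : ℝ → Set E := fun u => if u ∈ Icc a b then univ else ∅ with hs
  have hv : ∀ u, LipschitzOnWith K (fun y => B u y) (s u) := by
    intro u
    by_cases h : u ∈ Icc a b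
    · simp only [hs, if_pos h]
      refine ((B u).lipschitz.weaken ?_).lipschitzOnWith
      have : ‖B u‖ ≤ max C 0 := le_trans (hC u h) (le_max_left _ _)
      exact this
    · simp only [hs, if_neg h]
      exact lipschitzOnWith_empty K (fun y => B u y)
  have ht₀ : t₀ ∈ Ioo a b := by
    constructor
    · have := min_le_right t t₀; linarith
    · have := le_max_right t t₀; linarith
  have key := ODE_solution_unique_of_mem_Icc (v := fun u y => B u y) (s := s) (fun u _ => hv u) ht₀
    (fun k _ => (hf k).continuousAt.continuousWithinAt)
    (fun u hu => hf u)
    (fun u hu => by simp [hs, Ioo_subset_Icc_self hu, (Ioo_subset_Icc_self hu).1, (Ioo_subset_Icc_self hu).2])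
    (fun k _ => (hg k).continuousAt.continuousWithinAt)
    (fun u hu => hg u)
    (fun u hu => by simp [hs, Ioo_subset_Icc_self hu, (Ioo_subset_Icc_self hu).1, (Ioo_subset_Icc_self hu).2])
    h0
  apply key
  constructor
  · have := min_le_left t t₀; linarith
  · have := le_max_left t t₀; linarith



/-- for a `C¹` TRS family of orthogonal projectors,
`P(-k) = θ P(k) θ⁻¹` with `θ` antiunitary, `θ² = -1`, the generator
`A(k) = i [∂ₖP(k), P(k)]` satisfies `A(-k) = θ A(k) θ⁻¹`, and consequently the
parallel transport satisfies `T(-k,-k') = θ T(k,k') θ⁻¹`. -/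
theorem statement13 {H : Type*} [NormedAddCommGroup H] [InnerProductSpace ℂ H]
    [CompleteSpace H]
    (θ : H → H)
    (hadd : ∀ x y, θ (x + y) = θ x + θ y)
    (hsmul : ∀ (c : ℂ) (x : H), θ (c • x) = (starRingEnd ℂ c) • θ x)
    (hsurj : Function.Surjective θ)
    (hinner : ∀ x y, (inner ℂ (θ x) (θ y) : ℂ) = inner ℂ y x)
    (hsq : ∀ x, θ (θ x) = -x)
    (P P' : ℝ → H →L[ℂ] H)
    (hproj : ∀ k, (P k).comp (P k) = P k)
    (hsa : ∀ k, ContinuousLinearMap.adjoint (P k) = P k)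
    (hderiv : ∀ k, HasDerivAt P (P' k) k)
    (hcont : Continuous P')
    (hPTRS : ∀ k x, θ (P k x) = P (-k) (θ x))
    (A : ℝ → H →L[ℂ] H)
    (hA : ∀ k, A k = Complex.I • ((P' k).comp (P k) - (P k).comp (P' k)))
    (T : ℝ → ℝ → H →L[ℂ] H)
    (hT : ∀ k' k, HasDerivAt (fun s => T s k')
      ((-Complex.I) • ((A k).comp (T k k'))) k)
    (hT0 : ∀ k', T k' k' = 1) :
    (∀ k x, θ (A k x) = A (-k) (θ x)) ∧
    (∀ k k' x, θ (T k k' x) = T (-k) (-k') (θ x)) := by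
  -- θ is real-linear and norm-preserving
  have hrsmul : ∀ (r : ℝ) (x : H), θ (r • x) = r • θ x := by
    intro r x
    have h1 : (r : ℂ) • x = r • x := by
      rw [← smul_one_smul ℂ r x, Complex.real_smul, mul_one]
    have h2 : (r : ℂ) • θ x = r • θ x := by
      rw [← smul_one_smul ℂ r (θ x), Complex.real_smul, mul_one]
    rw [← h1, hsmul, Complex.conj_ofReal, h2]
  have hΘnorm : ∀ x, ‖θ x‖ = ‖x‖ := by
    intro x
    have h := hinner x x
    have h3 : (‖θ x‖ : ℝ) ^ 2 = ‖x‖ ^ 2 := by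
      rw [← inner_self_eq_norm_sq (𝕜 := ℂ), ← inner_self_eq_norm_sq (𝕜 := ℂ), h]
    have := congrArg Real.sqrt h3
    simpa [Real.sqrt_sq, norm_nonneg] using this
  have hsub : ∀ a b, θ (a - b) = θ a - θ b := by
    intro a b
    have hb : -b = (-1 : ℂ) • b := by simp
    rw [sub_eq_add_neg, hadd, hb, hsmul]
    simp [sub_eq_add_neg]
  set Θl : H →ₗ[ℝ] H :=
    { toFun := θ, map_add' := hadd, map_smul' := fun r x => hrsmul r x } with hΘl
  set Θ : H →L[ℝ] H := Θl.mkContinuous 1 (fun x => by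
    simp only [hΘl, LinearMap.coe_mk, AddHom.coe_mk, one_mul]
    exact le_of_eq (hΘnorm x)) with hΘ
  have hΘap : ∀ x, Θ x = θ x := fun x => rfl
  -- pointwise derivatives
  have hPx : ∀ (x : H) k, HasDerivAt (fun s => P s x) (P' k x) k := by
    intro x k
    have := ((ContinuousLinearMap.apply ℂ H x).restrictScalars ℝ).hasFDerivAt.comp_hasDerivAt k (hderiv k)
    simpa [Function.comp_def] using this
  -- derivative relation for P'
  have hP'θ : ∀ k x, θ (P' k x) = -(P' (-k) (θ x)) := by
    intro k x
    have h1 : HasDerivAt (fun s => θ (P s x)) (θ (P' k x)) k := by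
      have := Θ.hasFDerivAt.comp_hasDerivAt k (hPx x k)
      simpa [hΘap, Function.comp_def] using this
    have h2 : HasDerivAt (fun s => P (-s) (θ x)) (-(P' (-k) (θ x))) k := by
      have := (hPx (θ x) (-k)).scomp k (hasDerivAt_neg k)
      simpa [Function.comp_def] using this
    have heq : (fun s => θ (P s x)) = fun s => P (-s) (θ x) := funext fun s => hPTRS s x
    rw [heq] at h1
    exact h1.unique h2
  -- part 1
  have hAθ : ∀ k x, θ (A k x) = A (-k) (θ x) := by
    intro k x
    rw [hA k, hA (-k)]
    simp only [ContinuousLinearMap.smul_apply, ContinuousLinearMap.sub_apply,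
      ContinuousLinearMap.comp_apply]
    rw [hsmul, Complex.conj_I, hsub, hP'θ k (P k x), hPTRS k x, hPTRS k (P' k x), hP'θ k x]
    simp [smul_sub, smul_neg, sub_eq_add_neg]
  refine ⟨hAθ, ?_⟩
  -- continuity of A
  have hPc : Continuous P := by
    rw [continuous_iff_continuousAt]; exact fun k => (hderiv k).continuousAt
  have hAc : Continuous A := by
    have hAfun : A = fun k => Complex.I • ((P' k).comp (P k) - (P k).comp (P' k)) := funext hA
    rw [hAfun]
    exact (continuous_const (y := Complex.I)).smul ((hcont.clm_comp hPc).sub (hPc.clm_comp hcont))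
  -- part 2 via ODE uniqueness
  intro k k' x
  have hTx : ∀ (k' : ℝ) (x : H) (k : ℝ), HasDerivAt (fun s => T s k' x)
      ((-Complex.I) • (A k (T k k' x))) k := by
    intro k' x k
    have := ((ContinuousLinearMap.apply ℂ H x).restrictScalars ℝ).hasFDerivAt.comp_hasDerivAt k (hT k' k)
    simpa [Function.comp_def] using this
  set B : ℝ → H →L[ℂ] H := fun u => Complex.I • A (-u) with hB
  have hBc : Continuous B := ((continuous_const (y := Complex.I)).smul (hAc.comp continuous_neg))
  have hf : ∀ u, HasDerivAt (fun s => θ (T s k' x)) (B u (θ (T u k' x))) u := by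
    intro u
    have h1 : HasDerivAt (fun s => θ (T s k' x)) (θ ((-Complex.I) • (A u (T u k' x)))) u := by
      have := Θ.hasFDerivAt.comp_hasDerivAt u (hTx k' x u)
      simpa [hΘap, Function.comp_def] using this
    have h2 : θ ((-Complex.I) • (A u (T u k' x))) = B u (θ (T u k' x)) := by
      rw [hsmul]
      simp only [map_neg, Complex.conj_I, neg_neg, hB, ContinuousLinearMap.smul_apply]
      rw [hAθ u (T u k' x)]
    rwa [h2] at h1
  have hg : ∀ u, HasDerivAt (fun s => T (-s) (-k') (θ x)) (B u (T (-u) (-k') (θ x))) u := by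
    intro u
    have h1 := (hTx (-k') (θ x) (-u)).scomp u (hasDerivAt_neg u)
    have h2 : (-1 : ℝ) • ((-Complex.I) • (A (-u) (T (-u) (-k') (θ x))))
        = B u (T (-u) (-k') (θ x)) := by
      simp [hB]
    simpa [h2, hB, Function.comp_def] using h1
  have h0 : θ (T k' k' x) = T (-k') (-k') (θ x) := by
    rw [hT0, hT0]; rfl
  exact ode_unique B hBc (fun s => θ (T s k' x)) (fun s => T (-s) (-k') (θ x)) hf hg k' h0 k
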